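/- arXiv:2605.23366 — 3 statements merged into one kernel-verified Lean document; each statement's English description precedes it below -/
import Mathlib

section
/- Let A > 0 and η > 2. Then ∫₀^∞ (1 − (1 + A r^{−η})^{−1/2}) r dr = (A^{2/η}/2) · Γ(1 − 2/η) Γ(1/2 + 2/η) / √π, where Γ is the Gamma function and the integral is with respect to Lebesgue measure on (0, ∞). -/
open MeasureTheory Real Set Filter Topology


lemma beta_Ioo (a b : ℝ) (ha : 0 < a) (hb : 0 < b) :
    ∫ x in Ioo (0:ℝ) 1, x ^ (a-1) * (1-x) ^ (b-1) =
      Real.Gamma a * Real.Gamma b / Real.Gamma (a+b) := by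
  have key : Complex.betaIntegral a b
      = ((∫ x in Ioo (0:ℝ) 1, x ^ (a-1) * (1-x) ^ (b-1) : ℝ) : ℂ) := by
    rw [Complex.betaIntegral, intervalIntegral.integral_of_le zero_le_one,
      integral_Ioc_eq_integral_Ioo,
      show ((∫ x in Ioo (0:ℝ) 1, x ^ (a-1) * (1-x) ^ (b-1) : ℝ) : ℂ)
        = ∫ x in Ioo (0:ℝ) 1, ((x ^ (a-1) * (1-x) ^ (b-1) : ℝ) : ℂ) from integral_ofReal.symm]
    refine setIntegral_congr_fun measurableSet_Ioo (fun x hx => ?_)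
    rw [Complex.ofReal_mul, Complex.ofReal_cpow hx.1.le, Complex.ofReal_cpow (by linarith [hx.2])]
    push_cast
    ring_nf
  have hG := Complex.Gamma_mul_Gamma_eq_betaIntegral
    (s := (a:ℂ)) (t := (b:ℂ)) (by simpa using ha) (by simpa using hb)
  rw [key] at hG
  have hab : Real.Gamma (a+b) ≠ 0 := (Real.Gamma_pos_of_pos (by linarith)).ne'
  have h2 : ((Real.Gamma a * Real.Gamma b : ℝ) : ℂ)
      = ((Real.Gamma (a+b) * ∫ x in Ioo (0:ℝ) 1, x ^ (a-1) * (1-x) ^ (b-1) : ℝ) : ℂ) := by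
    push_cast [← Complex.Gamma_ofReal]
    simpa using hG
  field_simp
  linarith [Complex.ofReal_injective h2]

lemma beta_Ioi_aux (g : ℝ → ℝ) :
    ∫ u in Ioi (0:ℝ), g u = ∫ x in Ioo (0:ℝ) 1, ((1-x)^2)⁻¹ * g (x / (1-x)) := by
  have hderiv : ∀ x ∈ Ioo (0:ℝ) 1,
      HasDerivWithinAt (fun x => x / (1-x)) (((1-x)^2)⁻¹) (Ioo (0:ℝ) 1) x := by
    intro x hx
    have h1 : (1:ℝ) - x ≠ 0 := by have := hx.2; intro h; nlinarith
    have := ((hasDerivAt_id x).div ((hasDerivAt_id x).const_sub 1) h1).hasDerivWithinAt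
      (s := Ioo (0:ℝ) 1)
    refine this.congr_deriv ?_
    simp only [id]
    ring
  have hinj : InjOn (fun x => x / (1-x)) (Ioo (0:ℝ) 1) := by
    intro x hx y hy hxy
    have h1 : (1:ℝ) - x ≠ 0 := by have := hx.2; intro h; nlinarith
    have h2 : (1:ℝ) - y ≠ 0 := by have := hy.2; intro h; nlinarith
    field_simp at hxy
    linarith
  have himg : (fun x => x / (1-x)) '' Ioo (0:ℝ) 1 = Ioi 0 := by
    ext u
    simp only [mem_image, mem_Ioi, mem_Ioo]
    constructor
    · rintro ⟨x, ⟨hx0, hx1⟩, rfl⟩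
      have : (0:ℝ) < 1 - x := by linarith
      positivity
    · intro hu
      refine ⟨u / (1+u), ⟨by positivity, by rw [div_lt_one (by linarith)]; linarith⟩, ?_⟩
      have h1 : (1:ℝ) + u ≠ 0 := by positivity
      field_simp
      ring
  have := integral_image_eq_integral_abs_deriv_smul measurableSet_Ioo hderiv hinj g
  rw [himg] at this
  rw [this]
  refine setIntegral_congr_fun measurableSet_Ioo (fun x hx => ?_)
  have h1 : (0:ℝ) < 1 - x := by linarith [hx.2]
  rw [smul_eq_mul, abs_of_pos (by positivity)]

lemma beta_Ioi (a b : ℝ) (ha : 0 < a) (hb : 0 < b) :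
    ∫ u in Ioi (0:ℝ), u ^ (a-1) * (1+u) ^ (-(a+b)) =
      Real.Gamma a * Real.Gamma b / Real.Gamma (a+b) := by
  rw [beta_Ioi_aux, ← beta_Ioo a b ha hb]
  refine setIntegral_congr_fun measurableSet_Ioo (fun x hx => ?_)
  have hx0 : (0:ℝ) < x := hx.1
  have h1 : (0:ℝ) < 1 - x := by linarith [hx.2]
  have e1 : (x / (1-x)) ^ (a-1) = x ^ (a-1) * ((1-x) ^ (a-1))⁻¹ := by
    rw [Real.div_rpow hx0.le h1.le, div_eq_mul_inv]
  have e2 : (1 + x / (1-x)) = (1-x)⁻¹ := by field_simp; ring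
  have e3 : ((1-x)⁻¹) ^ (-(a+b)) = (1-x) ^ (a+b) := by
    rw [Real.inv_rpow h1.le, Real.rpow_neg h1.le, inv_inv]
  have e4 : ((1-x)^2)⁻¹ = (1-x) ^ (-2:ℝ) := by
    rw [Real.rpow_neg h1.le, ← Real.rpow_natCast (1-x) 2]
    norm_num
  have e5 : ((1-x) ^ (a-1))⁻¹ = (1-x) ^ (-(a-1)) := (Real.rpow_neg h1.le _).symm
  rw [e2, e1, e3, e4, e5,
    show (1-x) ^ (-2:ℝ) * (x ^ (a-1) * (1-x) ^ (-(a-1)) * (1-x) ^ (a+b))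
      = x ^ (a-1) * ((1-x) ^ (-2:ℝ) * (1-x) ^ (-(a-1)) * (1-x) ^ (a+b)) from by ring,
    ← Real.rpow_add h1, ← Real.rpow_add h1]
  congr 1
  ring

lemma bnd0 {u : ℝ} (hu : 0 ≤ u) : 0 ≤ 1 - (1+u) ^ (-(1/2):ℝ) := by
  have := Real.rpow_le_one_of_one_le_of_nonpos (by linarith : (1:ℝ) ≤ 1+u)
    (by norm_num : -(1/2:ℝ) ≤ 0)
  linarith

lemma bnd1 {u : ℝ} (hu : 0 ≤ u) : 1 - (1+u) ^ (-(1/2):ℝ) ≤ u := by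
  have hpos : (0:ℝ) < 1 + u := by linarith
  have hrp : (0:ℝ) < (1+u) ^ (-(1/2):ℝ) := Real.rpow_pos_of_pos hpos _
  rcases le_or_gt 1 u with h | h
  · linarith
  · have h2 : ((1+u) ^ (-(1/2):ℝ)) ^ (2:ℕ) = (1+u)⁻¹ := by
      rw [← Real.rpow_natCast ((1+u) ^ (-(1/2):ℝ)) 2, ← Real.rpow_mul hpos.le]
      norm_num
      exact Real.rpow_neg_one _
    have key : (1-u)^(2:ℕ) * (1+u) ≤ 1 := by nlinarith [mul_le_mul_of_nonneg_left h.le (mul_nonneg hu hu)]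
    have h3 : (1-u) ^ (2:ℕ) ≤ ((1+u) ^ (-(1/2):ℝ)) ^ (2:ℕ) := by
      rw [h2]
      calc (1-u)^(2:ℕ) = ((1-u)^(2:ℕ) * (1+u)) * (1+u)⁻¹ := by field_simp
        _ ≤ 1 * (1+u)⁻¹ := mul_le_mul_of_nonneg_right key (by positivity)
        _ = (1+u)⁻¹ := one_mul _
    have h4 : (1-u : ℝ) ≤ (1+u) ^ (-(1/2):ℝ) := by
      rcases le_or_gt (1-u) 0 with h5 | h5
      · linarith
      · exact (pow_le_pow_iff_left₀ h5.le hrp.le (by norm_num)).mp h3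
    linarith

lemma meas1 (c : ℝ) : AEStronglyMeasurable (fun u : ℝ => u ^ c)
    (volume.restrict (Ioi (0:ℝ))) :=
  ContinuousOn.aestronglyMeasurable
    (fun x hx => (Real.continuousAt_rpow_const x c (Or.inl (ne_of_gt hx))).continuousWithinAt)
    measurableSet_Ioi

lemma meas2 (c : ℝ) : AEStronglyMeasurable (fun u : ℝ => (1+u) ^ c)
    (volume.restrict (Ioi (0:ℝ))) :=
  ContinuousOn.aestronglyMeasurable
    (fun x hx => (ContinuousAt.rpow_const (by fun_prop)
      (Or.inl (by have := mem_Ioi.mp hx; positivity))).continuousWithinAt)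
    measurableSet_Ioi

lemma int_piece {s : ℝ} (hs0 : 0 < s) (hs1 : s < 1) (f : ℝ → ℝ)
    (hm : AEStronglyMeasurable f (volume.restrict (Ioi (0:ℝ))))
    (h1 : ∀ u : ℝ, u ∈ Ioc (0:ℝ) 1 → ‖f u‖ ≤ u ^ (-s))
    (h2 : ∀ u : ℝ, u ∈ Ioi (1:ℝ) → ‖f u‖ ≤ u ^ (-1-s)) :
    IntegrableOn f (Ioi (0:ℝ)) := by
  have hsplit : Ioi (0:ℝ) = Ioc (0:ℝ) 1 ∪ Ioi (1:ℝ) := (Ioc_union_Ioi_eq_Ioi zero_le_one).symm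
  rw [hsplit]
  apply IntegrableOn.union
  · have hg : IntegrableOn (fun u : ℝ => u ^ (-s)) (Ioc (0:ℝ) 1) := by
      have := intervalIntegral.intervalIntegrable_rpow' (a := 0) (b := 1)
        (r := -s) (by linarith)
      exact (intervalIntegrable_iff_integrableOn_Ioc_of_le zero_le_one).mp this
    apply Integrable.mono hg (hm.mono_set (by rw [hsplit]; exact subset_union_left))
    filter_upwards [ae_restrict_mem measurableSet_Ioc] with u hu
    calc ‖f u‖ ≤ u ^ (-s) := h1 u hu
      _ ≤ ‖u ^ (-s)‖ := le_abs_self _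
  · have hg : IntegrableOn (fun u : ℝ => u ^ (-1-s)) (Ioi (1:ℝ)) :=
      integrableOn_Ioi_rpow_of_lt (by linarith) one_pos
    apply Integrable.mono hg (hm.mono_set (by rw [hsplit]; exact subset_union_right))
    filter_upwards [ae_restrict_mem measurableSet_Ioi] with u hu
    calc ‖f u‖ ≤ u ^ (-1-s) := h2 u hu
      _ ≤ ‖u ^ (-1-s)‖ := le_abs_self _

lemma int1 {s : ℝ} (hs0 : 0 < s) (hs1 : s < 1) :
    IntegrableOn (fun u : ℝ => u ^ (-s) * (1+u) ^ (-(3/2):ℝ)) (Ioi (0:ℝ)) := by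
  apply int_piece hs0 hs1
  · exact (meas1 (-s)).mul (meas2 (-(3/2)))
  · intro u hu
    have hu0 : (0:ℝ) < u := hu.1
    rw [Real.norm_eq_abs, abs_of_nonneg (by positivity)]
    calc u ^ (-s) * (1+u) ^ (-(3/2):ℝ) ≤ u ^ (-s) * 1 := by
          apply mul_le_mul_of_nonneg_left
            (Real.rpow_le_one_of_one_le_of_nonpos (by linarith) (by norm_num))
            (Real.rpow_nonneg hu0.le _)
      _ = u ^ (-s) := mul_one _
  · intro u hu
    have hu1 : (1:ℝ) < u := mem_Ioi.mp hu
    have hu0 : (0:ℝ) < u := by linarith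
    rw [Real.norm_eq_abs, abs_of_nonneg (by positivity)]
    calc u ^ (-s) * (1+u) ^ (-(3/2):ℝ) ≤ u ^ (-s) * u ^ (-(3/2):ℝ) := by
          apply mul_le_mul_of_nonneg_left
            (Real.rpow_le_rpow_of_nonpos hu0 (by linarith) (by norm_num))
            (Real.rpow_nonneg hu0.le _)
      _ = u ^ (-s + -(3/2):ℝ) := (Real.rpow_add hu0 _ _).symm
      _ ≤ u ^ (-1-s) := Real.rpow_le_rpow_of_exponent_le hu1.le (by linarith)

lemma int2 {s : ℝ} (hs0 : 0 < s) (hs1 : s < 1) :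
    IntegrableOn (fun u : ℝ => (1 - (1+u) ^ (-(1/2):ℝ)) * u ^ (-1-s)) (Ioi (0:ℝ)) := by
  apply int_piece hs0 hs1
  · exact ((aestronglyMeasurable_const.sub (meas2 (-(1/2)))).mul (meas1 (-1-s)))
  · intro u hu
    have hu0 : (0:ℝ) < u := hu.1
    rw [Real.norm_eq_abs, abs_of_nonneg (mul_nonneg (bnd0 hu0.le) (Real.rpow_nonneg hu0.le _))]
    calc (1 - (1+u) ^ (-(1/2):ℝ)) * u ^ (-1-s) ≤ u * u ^ (-1-s) :=
          mul_le_mul_of_nonneg_right (bnd1 hu0.le) (Real.rpow_nonneg hu0.le _)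
      _ = u ^ (1 + (-1-s)) := by rw [Real.rpow_add hu0, Real.rpow_one]
      _ = u ^ (-s) := by rw [show (1:ℝ) + (-1-s) = -s by ring]
  · intro u hu
    have hu0 : (0:ℝ) < u := by have := mem_Ioi.mp hu; linarith
    rw [Real.norm_eq_abs, abs_of_nonneg (mul_nonneg (bnd0 hu0.le) (Real.rpow_nonneg hu0.le _))]
    calc (1 - (1+u) ^ (-(1/2):ℝ)) * u ^ (-1-s) ≤ 1 * u ^ (-1-s) := by
          apply mul_le_mul_of_nonneg_right _ (Real.rpow_nonneg hu0.le _)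
          have := Real.rpow_pos_of_pos (show (0:ℝ) < 1+u by linarith) (-(1/2):ℝ)
          linarith
      _ = u ^ (-1-s) := one_mul _

lemma J_eval {s : ℝ} (hs0 : 0 < s) (hs1 : s < 1) :
    ∫ u in Ioi (0:ℝ), (1 - (1+u) ^ (-(1/2):ℝ)) * u ^ (-1-s)
      = (1/(2*s)) * ∫ u in Ioi (0:ℝ), u ^ (-s) * (1+u) ^ (-(3/2):ℝ) := by
  set F : ℝ → ℝ := fun u => (-(1/s)) * ((1 - (1+u) ^ (-(1/2):ℝ)) * u ^ (-s)) with hF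
  have hF0 : F 0 = 0 := by
    simp [hF, Real.zero_rpow (neg_ne_zero.mpr hs0.ne')]
  have hderiv : ∀ u ∈ Ioi (0:ℝ), HasDerivAt F
      ((1 - (1+u) ^ (-(1/2):ℝ)) * u ^ (-1-s)
        - (1/(2*s)) * (u ^ (-s) * (1+u) ^ (-(3/2):ℝ))) u := by
    intro u hu
    have hu0 : (0:ℝ) < u := mem_Ioi.mp hu
    have h1u : (0:ℝ) < 1 + u := by linarith
    have hInner : HasDerivAt (fun u : ℝ => 1 + u) 1 u := (hasDerivAt_id u).const_add 1
    have hrpow : HasDerivAt (fun u : ℝ => (1+u) ^ (-(1/2):ℝ))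
        ((-(1/2) * (1+u) ^ ((-(1/2):ℝ)-1)) * 1) u :=
      (Real.hasDerivAt_rpow_const (x := 1+u) (p := -(1/2)) (Or.inl h1u.ne')).comp u hInner
    have hone : HasDerivAt (fun u : ℝ => 1 - (1+u) ^ (-(1/2):ℝ))
        (-((-(1/2) * (1+u) ^ ((-(1/2):ℝ)-1)) * 1)) u := hrpow.const_sub 1
    have hpow : HasDerivAt (fun u : ℝ => u ^ (-s)) (-s * u ^ (-s-1)) u :=
      Real.hasDerivAt_rpow_const (Or.inl hu0.ne')
    have hmul := (hone.mul hpow).const_mul (-(1/s))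
    refine hmul.congr_deriv ?_
    rw [show ((-(1/2):ℝ)-1) = (-(3/2):ℝ) by norm_num, show (-s-1 : ℝ) = (-1-s) by ring]
    field_simp
    ring
  have hcont : ContinuousWithinAt F (Ici (0:ℝ)) 0 := by
    rw [ContinuousWithinAt, hF0]
    have hlim : Tendsto (fun u : ℝ => -((1/s) * u ^ (1-s))) (nhdsWithin 0 (Ici (0:ℝ))) (𝓝 0) := by
      have h0 : Tendsto (fun u : ℝ => u ^ (1-s)) (nhdsWithin 0 (Ici (0:ℝ))) (𝓝 0) := by
        have := (Real.continuousAt_rpow_const 0 (1-s) (Or.inr (by linarith))).tendsto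
        rw [Real.zero_rpow (by intro h; exact absurd h (by linarith))] at this
        exact this.mono_left nhdsWithin_le_nhds
      have := (h0.const_mul (1/s)).neg
      simpa using this
    apply tendsto_of_tendsto_of_tendsto_of_le_of_le' hlim tendsto_const_nhds
    · filter_upwards [eventually_mem_nhdsWithin] with u (hu : u ∈ Ici (0:ℝ))
      rcases eq_or_lt_of_le (mem_Ici.mp hu) with h | h
      · simp [hF, ← h, Real.zero_rpow (neg_ne_zero.mpr hs0.ne'),
          Real.zero_rpow (show (1:ℝ)-s ≠ 0 by intro hh; linarith)]
      · have key : (1 - (1+u) ^ (-(1/2):ℝ)) * u ^ (-s) ≤ u ^ (1-s) := by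
          calc (1 - (1+u) ^ (-(1/2):ℝ)) * u ^ (-s) ≤ u * u ^ (-s) :=
                mul_le_mul_of_nonneg_right (bnd1 h.le) (Real.rpow_nonneg h.le _)
            _ = u ^ (1-s) := by
                rw [show (1:ℝ)-s = 1 + (-s) by ring, Real.rpow_add h, Real.rpow_one]
        have h1s : (0:ℝ) < 1/s := by positivity
        simp only [hF, neg_mul, neg_le_neg_iff]
        exact mul_le_mul_of_nonneg_left key (by positivity)
    · filter_upwards [eventually_mem_nhdsWithin] with u (hu : u ∈ Ici (0:ℝ))
      have : 0 ≤ (1 - (1+u) ^ (-(1/2):ℝ)) * u ^ (-s) :=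
        mul_nonneg (bnd0 (mem_Ici.mp hu)) (Real.rpow_nonneg (mem_Ici.mp hu) _)
      simp only [hF, neg_mul]
      have h2 := mul_nonneg (le_of_lt (show (0:ℝ) < 1/s by positivity)) this
      linarith
  have htop : Tendsto F atTop (𝓝 0) := by
    have hlim : Tendsto (fun u : ℝ => -((1/s) * u ^ (-s))) atTop (𝓝 0) := by
      have := ((tendsto_rpow_neg_atTop hs0).const_mul (1/s)).neg
      simpa using this
    apply tendsto_of_tendsto_of_tendsto_of_le_of_le' hlim tendsto_const_nhds
    · filter_upwards [eventually_ge_atTop (0:ℝ)] with u hu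
      have key : (1 - (1+u) ^ (-(1/2):ℝ)) * u ^ (-s) ≤ u ^ (-s) := by
        have := Real.rpow_pos_of_pos (show (0:ℝ) < 1+u by linarith) (-(1/2):ℝ)
        nlinarith [Real.rpow_nonneg hu (-s)]
      simp only [hF, neg_mul, neg_le_neg_iff]
      exact mul_le_mul_of_nonneg_left key (by positivity)
    · filter_upwards [eventually_ge_atTop (0:ℝ)] with u hu
      have : 0 ≤ (1 - (1+u) ^ (-(1/2):ℝ)) * u ^ (-s) :=
        mul_nonneg (bnd0 hu) (Real.rpow_nonneg hu _)
      simp only [hF, neg_mul]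
      have h2 := mul_nonneg (le_of_lt (show (0:ℝ) < 1/s by positivity)) this
      linarith
  have hint : IntegrableOn (fun u : ℝ =>
      (1 - (1+u) ^ (-(1/2):ℝ)) * u ^ (-1-s)
        - (1/(2*s)) * (u ^ (-s) * (1+u) ^ (-(3/2):ℝ))) (Ioi (0:ℝ)) :=
    (int2 hs0 hs1).sub ((int1 hs0 hs1).const_mul _)
  have hIBP := integral_Ioi_of_hasDerivAt_of_tendsto hcont hderiv hint htop
  rw [hF0, sub_zero] at hIBP
  rw [integral_sub (int2 hs0 hs1) ((int1 hs0 hs1).const_mul _),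
    MeasureTheory.integral_const_mul] at hIBP
  linarith [hIBP]


/-- **Lemma 2 of the paper.** For `A > 0` and `η > 2`,
`∫₀^∞ (1 - (1 + A r^(-η))^(-1/2)) r dr = (A^(2/η)/2) Γ(1 - 2/η) Γ(1/2 + 2/η) / √π`. -/
theorem interference_integral_closed_form (A η : ℝ) (hA : 0 < A) (hη : 2 < η) :
    ∫ r in Set.Ioi (0 : ℝ), (1 - (1 + A * r ^ (-η)) ^ (-(1 / 2) : ℝ)) * r =
      A ^ (2 / η) / 2 *
        (Real.Gamma (1 - 2 / η) * Real.Gamma (1 / 2 + 2 / η) / Real.sqrt Real.pi) := by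
  have hη0 : (0:ℝ) < η := by linarith
  set s : ℝ := 2 / η with hs
  have hs0 : 0 < s := by positivity
  have hs1 : s < 1 := by rw [hs, div_lt_one hη0]; linarith
  have hηs : η * s = 2 := by rw [hs]; field_simp
  set g : ℝ → ℝ := fun t => (1/η) * ((1 - (1 + A * t) ^ (-(1/2) : ℝ)) * t ^ (-1-s)) with hg
  -- Step A : substitution t = r ^ (-η)
  have stepA : ∫ r in Ioi (0:ℝ), (1 - (1 + A * r ^ (-η)) ^ (-(1 / 2) : ℝ)) * r
      = ∫ t in Ioi (0:ℝ), g t := by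
    rw [← integral_comp_rpow_Ioi g (show -η ≠ 0 by intro h; rw [neg_eq_zero] at h; linarith)]
    refine setIntegral_congr_fun measurableSet_Ioi (fun x hx => ?_)
    have hx0 : (0:ℝ) < x := mem_Ioi.mp hx
    have e1 : (x ^ (-η)) ^ (-1-s) = x ^ (η+2) := by
      rw [← Real.rpow_mul hx0.le]
      congr 1
      have h9 : (-η)*(-1-s) = η + η * s := by ring
      rw [h9, hηs]
    have e2 : x ^ (-η-1) * x ^ (η+2) = x := by
      rw [← Real.rpow_add hx0, show -η-1+(η+2) = (1:ℝ) by ring, Real.rpow_one]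
    rw [smul_eq_mul, hg]
    simp only [abs_neg, abs_of_pos hη0]
    symm
    calc η * x ^ (-η - 1) *
          ((1/η) * ((1 - (1 + A * x ^ (-η)) ^ (-(1/2) : ℝ)) * (x ^ (-η)) ^ (-1-s)))
        = (η * (1/η)) * ((1 - (1 + A * x ^ (-η)) ^ (-(1/2) : ℝ)) * (x ^ (-η-1) * x ^ (η+2))) := by
          rw [e1]; ring
      _ = (1 - (1 + A * x ^ (-η)) ^ (-(1/2) : ℝ)) * x := by
          rw [e2, mul_one_div_cancel hη0.ne', one_mul]
  -- Step C : scaling u = A * t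
  have stepC : ∫ t in Ioi (0:ℝ), (1 - (1 + A * t) ^ (-(1/2) : ℝ)) * t ^ (-1-s)
      = A ^ s * ∫ u in Ioi (0:ℝ), (1 - (1 + u) ^ (-(1/2) : ℝ)) * u ^ (-1-s) := by
    set G : ℝ → ℝ := fun u => (1 - (1 + u) ^ (-(1/2) : ℝ)) * u ^ (-1-s) * A ^ ((1:ℝ)+s) with hG
    have h1 : ∫ t in Ioi (0:ℝ), (1 - (1 + A * t) ^ (-(1/2) : ℝ)) * t ^ (-1-s)
        = ∫ t in Ioi (0:ℝ), G (A * t) := by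
      refine setIntegral_congr_fun measurableSet_Ioi (fun t ht => ?_)
      have ht0 : (0:ℝ) < t := mem_Ioi.mp ht
      rw [hG]
      simp only
      rw [Real.mul_rpow hA.le ht0.le]
      have h2 : A ^ (-1-s) * A ^ ((1:ℝ)+s) = 1 := by
        rw [← Real.rpow_add hA, show -1-s+((1:ℝ)+s) = 0 by ring, Real.rpow_zero]
      calc (1 - (1 + A * t) ^ (-(1/2) : ℝ)) * t ^ (-1-s)
          = (1 - (1 + A * t) ^ (-(1/2) : ℝ)) * t ^ (-1-s) * (A ^ (-1-s) * A ^ ((1:ℝ)+s)) := by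
            rw [h2, mul_one]
        _ = (1 - (1 + A * t) ^ (-(1/2) : ℝ)) * (A ^ (-1-s) * t ^ (-1-s)) * A ^ ((1:ℝ)+s) := by
            ring
    rw [h1, integral_comp_mul_left_Ioi G 0 hA, mul_zero, smul_eq_mul, hG]
    simp only
    rw [MeasureTheory.integral_mul_const]
    rw [show A⁻¹ = A ^ (-1:ℝ) from (Real.rpow_neg_one A).symm]
    have h3 : A ^ ((1:ℝ)+s) * A ^ (-1:ℝ) = A ^ s := by
      rw [← Real.rpow_add hA]; congr 1; ring
    calc A ^ (-1:ℝ) * ((∫ u in Ioi (0:ℝ), (1 - (1 + u) ^ (-(1/2) : ℝ)) * u ^ (-1-s)) * A ^ ((1:ℝ)+s))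
        = (A ^ ((1:ℝ)+s) * A ^ (-1:ℝ)) * ∫ u in Ioi (0:ℝ), (1 - (1 + u) ^ (-(1/2) : ℝ)) * u ^ (-1-s) := by
          ring
      _ = A ^ s * ∫ u in Ioi (0:ℝ), (1 - (1 + u) ^ (-(1/2) : ℝ)) * u ^ (-1-s) := by rw [h3]
  -- the beta integral
  have hK : ∫ u in Ioi (0:ℝ), u ^ (-s) * (1+u) ^ (-(3/2):ℝ)
      = Real.Gamma (1-s) * Real.Gamma (1/2+s) / Real.Gamma (3/2) := by
    have h4 := beta_Ioi (1-s) (1/2+s) (by linarith) (by linarith)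
    rw [show ((1-s)+(1/2+s):ℝ) = 3/2 by ring, show ((1-s)-1:ℝ) = -s by ring] at h4
    exact h4
  have hG32 : Real.Gamma (3/2) = Real.sqrt Real.pi / 2 := by
    rw [show (3/2:ℝ) = 1/2 + 1 by norm_num, Real.Gamma_add_one (by norm_num),
      Real.Gamma_one_half_eq]
    ring
  have hπ : (0:ℝ) < Real.sqrt Real.pi := Real.sqrt_pos.mpr Real.pi_pos
  rw [stepA, hg]
  simp only
  rw [MeasureTheory.integral_const_mul, stepC, J_eval hs0 hs1, hK, hG32]
  rw [div_div_eq_mul_div, div_mul_eq_mul_div]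
  field_simp
  ring_nf
  linear_combination (-Real.Gamma (1 - s)) * hηs
end

section
/- Let η > 2, let m₀ ≥ 1 be an integer, and let H_1, …, H_{m₀} > 0. For Λ > 0 define R̄_cell(Λ) = ∑_{k=1}^{m₀} (−1)^{k+1} C(m₀, k) ∫₀^∞ (1+x)^{−1} (Λ^{−1} + H_k x^{2/η})^{−1} dx, where C(m₀, k) is the binomial coefficient and the integrals are with respect to Lebesgue measure on (0, ∞). Then lim_{Λ→∞} R̄_cell(Λ) = (π / sin(2π/η)) · ∑_{k=1}^{m₀} (−1)^{k+1} C(m₀, k) / H_k. -/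
open MeasureTheory Filter Set Real

/-- The real Beta-type integral `∫₀¹ t^(-a) (1-t)^(a-1) dt = π / sin (π a)`. -/
lemma beta_aux {a : ℝ} (ha : 0 < a) (ha1 : a < 1) :
    ∫ t in Ioo (0:ℝ) 1, t ^ (-a) * (1 - t) ^ (a - 1) = π / Real.sin (π * a) := by
  have h1 : (0:ℝ) < 1 - a := by linarith
  have hB := Complex.Gamma_mul_Gamma_eq_betaIntegral
      (s := ((1 - a : ℝ) : ℂ)) (t := ((a : ℝ) : ℂ)) (by simpa using h1) (by simpa using ha)
  have hsum : ((1 - a : ℝ) : ℂ) + ((a : ℝ) : ℂ) = 1 := by push_cast; ring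
  rw [hsum, Complex.Gamma_one, one_mul, Complex.Gamma_ofReal, Complex.Gamma_ofReal,
    ← Complex.ofReal_mul] at hB
  have hL : Real.Gamma (1 - a) * Real.Gamma a = π / Real.sin (π * a) := by
    have := Real.Gamma_mul_Gamma_one_sub a
    linarith [this]
  rw [hL] at hB
  have hBr : Complex.betaIntegral ((1 - a : ℝ) : ℂ) ((a : ℝ) : ℂ)
      = ((∫ t in Ioo (0:ℝ) 1, t ^ (-a) * (1 - t) ^ (a - 1) : ℝ) : ℂ) := by
    rw [Complex.betaIntegral, intervalIntegral.integral_of_le zero_le_one,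
      ← MeasureTheory.integral_Ioc_eq_integral_Ioo,
      show ((∫ t in Ioc (0:ℝ) 1, t ^ (-a) * (1 - t) ^ (a - 1) : ℝ) : ℂ)
          = ∫ t in Ioc (0:ℝ) 1, ((t ^ (-a) * (1 - t) ^ (a - 1) : ℝ) : ℂ) from
        (integral_ofReal (𝕜 := ℂ)).symm]
    refine setIntegral_congr_fun measurableSet_Ioc fun x hx => ?_
    obtain ⟨hx0, hx1⟩ := hx
    have e1 : (((1 - a : ℝ)) : ℂ) - 1 = ((-a : ℝ) : ℂ) := by push_cast; ring
    have e2 : ((a : ℝ) : ℂ) - 1 = ((a - 1 : ℝ) : ℂ) := by push_cast; ring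
    have e3 : (1 : ℂ) - (x : ℂ) = ((1 - x : ℝ) : ℂ) := by push_cast; ring
    rw [e1, e2, e3, ← Complex.ofReal_cpow hx0.le, ← Complex.ofReal_cpow (by linarith),
      ← Complex.ofReal_mul]
  rw [hBr] at hB
  exact_mod_cast hB.symm

/-- Change of variables `x = t/(1-t)`. -/
lemma cov_aux {a : ℝ} (ha : 0 < a) (ha1 : a < 1) :
    ∫ x in Ioi (0:ℝ), (1 + x)⁻¹ * x ^ (-a)
      = ∫ t in Ioo (0:ℝ) 1, t ^ (-a) * (1 - t) ^ (a - 1) := by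
  have himg : (fun t : ℝ => t / (1 - t)) '' Ioo 0 1 = Ioi 0 := by
    ext y
    constructor
    · rintro ⟨t, ⟨ht0, ht1⟩, rfl⟩
      exact div_pos ht0 (by linarith)
    · intro hy
      simp only [Set.mem_Ioi] at hy
      have h1 : (0:ℝ) < 1 + y := by linarith
      refine ⟨y / (1 + y), ⟨div_pos hy h1, (div_lt_one h1).2 (by linarith)⟩, ?_⟩
      field_simp
      ring
  have hderiv : ∀ t ∈ Ioo (0:ℝ) 1, HasDerivWithinAt (fun t : ℝ => t / (1 - t))
      (((1 - t) ^ 2)⁻¹) (Ioo 0 1) t := by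
    intro t ht
    obtain ⟨ht0, ht1⟩ := ht
    have h1 : (1:ℝ) - t ≠ 0 := by intro h; linarith [sub_eq_zero.mp h]
    have hd := (hasDerivAt_id t).div ((hasDerivAt_id t).const_sub 1) h1
    simp only [id_eq] at hd
    have heq : (1 * (1 - t) - t * -1) / (1 - t) ^ 2 = ((1 - t) ^ 2)⁻¹ := by
      field_simp
      ring
    rw [heq] at hd
    exact hd.hasDerivWithinAt
  have hinj : InjOn (fun t : ℝ => t / (1 - t)) (Ioo 0 1) := by
    intro t1 h1 t2 h2 h
    obtain ⟨h10, h11⟩ := h1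
    obtain ⟨h20, h21⟩ := h2
    have d1 : (1:ℝ) - t1 ≠ 0 := by intro h; linarith [sub_eq_zero.mp h]
    have d2 : (1:ℝ) - t2 ≠ 0 := by intro h; linarith [sub_eq_zero.mp h]
    field_simp at h
    nlinarith [h]
  rw [← himg, integral_image_eq_integral_abs_deriv_smul measurableSet_Ioo hderiv hinj]
  refine setIntegral_congr_fun measurableSet_Ioo fun t ht => ?_
  obtain ⟨ht0, ht1⟩ := ht
  have h1 : (0:ℝ) < 1 - t := by linarith
  have h2 : (1 + t / (1 - t)) = (1 - t)⁻¹ := by field_simp; ring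
  rw [smul_eq_mul, h2, inv_inv, abs_of_pos (by positivity),
    Real.div_rpow ht0.le h1.le, Real.rpow_sub h1, Real.rpow_one]
  have hpow : (0:ℝ) < (1 - t) ^ a := Real.rpow_pos_of_pos h1 a
  have hneg : (1 - t) ^ (-a) = ((1 - t) ^ a)⁻¹ := Real.rpow_neg h1.le a
  rw [hneg]
  field_simp

/-- Integrability of the dominating function. -/
lemma bound_integrable {a : ℝ} (ha : 0 < a) (ha1 : a < 1) :
    IntegrableOn (fun x : ℝ => (1 + x)⁻¹ * x ^ (-a)) (Ioi (0:ℝ)) := by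
  have hmeas : Measurable fun x : ℝ => (1 + x)⁻¹ * x ^ (-a) :=
    ((measurable_const.add measurable_id).inv).mul (measurable_id.pow measurable_const)
  have hsplit : Ioc (0:ℝ) 1 ∪ Ioi (1:ℝ) = Ioi (0:ℝ) := Set.Ioc_union_Ioi_eq_Ioi zero_le_one
  rw [← hsplit]
  apply MeasureTheory.IntegrableOn.union
  · have hi : IntegrableOn (fun x : ℝ => x ^ (-a)) (Ioc (0:ℝ) 1) := by
      have := intervalIntegral.intervalIntegrable_rpow' (a := (0:ℝ)) (b := 1) (r := -a) (by linarith)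
      rwa [intervalIntegrable_iff_integrableOn_Ioc_of_le zero_le_one] at this
    refine hi.mono' hmeas.aestronglyMeasurable.restrict ?_
    rw [ae_restrict_iff' measurableSet_Ioc]
    filter_upwards with x hx
    obtain ⟨hx0, hx1⟩ := hx
    rw [Real.norm_eq_abs, abs_of_nonneg (by positivity)]
    exact mul_le_of_le_one_left (Real.rpow_nonneg hx0.le _)
      (inv_le_one_of_one_le₀ (by linarith))
  · have hi : IntegrableOn (fun x : ℝ => x ^ (-(1 + a))) (Ioi (1:ℝ)) :=
      integrableOn_Ioi_rpow_of_lt (by linarith) one_pos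
    refine hi.mono' hmeas.aestronglyMeasurable.restrict ?_
    rw [ae_restrict_iff' measurableSet_Ioi]
    filter_upwards with x hx
    simp only [Set.mem_Ioi] at hx
    have hx0 : (0:ℝ) < x := by linarith
    rw [Real.norm_eq_abs, abs_of_nonneg (by positivity)]
    have h1 : (1 + x)⁻¹ ≤ x⁻¹ := by
      apply inv_anti₀ hx0; linarith
    have h2 : x⁻¹ * x ^ (-a) = x ^ (-(1 + a)) := by
      rw [← Real.rpow_neg_one x, ← Real.rpow_add hx0]
      ring_nf
    calc (1 + x)⁻¹ * x ^ (-a) ≤ x⁻¹ * x ^ (-a) :=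
          mul_le_mul_of_nonneg_right h1 (Real.rpow_nonneg hx0.le _)
      _ = x ^ (-(1 + a)) := h2

/-- **Corollary 1 of the paper.** Let `η > 2`, `m₀ ≥ 1`, and
`H_1, …, H_{m₀} > 0`. With
`R̄_cell(Λ) = ∑_{k=1}^{m₀} (-1)^(k+1) C(m₀,k) ∫₀^∞ (1+x)⁻¹ (Λ⁻¹ + H_k x^(2/η))⁻¹ dx`,
we have `lim_{Λ → ∞} R̄_cell(Λ) = (π / sin(2π/η)) ∑_{k=1}^{m₀} (-1)^(k+1) C(m₀,k) / H_k`. -/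
theorem cell_sum_rate_saturation (η : ℝ) (hη : 2 < η) (m₀ : ℕ) (hm : 1 ≤ m₀)
    (H : ℕ → ℝ) (hH : ∀ k ∈ Finset.Icc 1 m₀, 0 < H k) :
    Tendsto
      (fun Λ : ℝ => ∑ k ∈ Finset.Icc 1 m₀,
        (-1 : ℝ) ^ (k + 1) * (m₀.choose k : ℝ) *
          ∫ x in Set.Ioi (0 : ℝ), (1 + x)⁻¹ * (Λ⁻¹ + H k * x ^ (2 / η))⁻¹)
      atTop
      (nhds (Real.pi / Real.sin (2 * Real.pi / η) *
        ∑ k ∈ Finset.Icc 1 m₀, (-1 : ℝ) ^ (k + 1) * (m₀.choose k : ℝ) / H k)) := by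
  have hη0 : (0:ℝ) < η := by linarith
  set a : ℝ := 2 / η with ha_def
  have ha : 0 < a := by positivity
  have ha1 : a < 1 := by
    rw [ha_def, div_lt_one hη0]; linarith
  have key : ∀ k ∈ Finset.Icc 1 m₀,
      Tendsto (fun Λ : ℝ => ∫ x in Set.Ioi (0:ℝ), (1 + x)⁻¹ * (Λ⁻¹ + H k * x ^ a)⁻¹) atTop
        (nhds ((H k)⁻¹ * (π / Real.sin (2 * π / η)))) := by
    intro k hk
    have hHk := hH k hk
    have hcongr : ∀ x ∈ Ioi (0:ℝ),
        (1 + x)⁻¹ * (H k * x ^ a)⁻¹ = (H k)⁻¹ * ((1 + x)⁻¹ * x ^ (-a)) := by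
      intro x hx
      simp only [Set.mem_Ioi] at hx
      rw [mul_inv, Real.rpow_neg hx.le]
      ring
    have hlimint : ∫ x in Set.Ioi (0:ℝ), (1 + x)⁻¹ * (H k * x ^ a)⁻¹
        = (H k)⁻¹ * (π / Real.sin (2 * π / η)) := by
      rw [setIntegral_congr_fun measurableSet_Ioi hcongr, MeasureTheory.integral_const_mul _ _,
        cov_aux ha ha1, beta_aux ha ha1]
      congr 2
      rw [ha_def]; ring
    rw [← hlimint]
    apply MeasureTheory.tendsto_integral_filter_of_dominated_convergence
      (bound := fun x => (1 + x)⁻¹ * (H k * x ^ a)⁻¹)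
    · filter_upwards [eventually_ge_atTop (1:ℝ)] with Λ hΛ
      exact (((measurable_const.add measurable_id).inv).mul
        ((measurable_const.add ((measurable_id.pow measurable_const).const_mul _)).inv)).aestronglyMeasurable.restrict
    · filter_upwards [eventually_ge_atTop (1:ℝ)] with Λ hΛ
      rw [ae_restrict_iff' measurableSet_Ioi]
      filter_upwards with x hx
      simp only [Set.mem_Ioi] at hx
      have hΛ0 : (0:ℝ) < Λ := lt_of_lt_of_le one_pos hΛ
      have hpos : (0:ℝ) < H k * x ^ a := by positivity
      rw [Real.norm_eq_abs, abs_of_nonneg (by positivity)]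
      apply mul_le_mul_of_nonneg_left _ (by positivity : (0:ℝ) ≤ (1 + x)⁻¹)
      apply inv_anti₀ hpos
      have : (0:ℝ) ≤ Λ⁻¹ := by positivity
      linarith
    · have := (bound_integrable ha ha1).const_mul (H k)⁻¹
      refine (MeasureTheory.integrableOn_congr_fun ?_ measurableSet_Ioi).mpr this
      intro x hx
      exact (hcongr x hx)
    · rw [ae_restrict_iff' measurableSet_Ioi]
      filter_upwards with x hx
      simp only [Set.mem_Ioi] at hx
      have hpos : (0:ℝ) < H k * x ^ a := by positivity
      have h1 : Tendsto (fun Λ : ℝ => Λ⁻¹ + H k * x ^ a) atTop (nhds (0 + H k * x ^ a)) :=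
        tendsto_inv_atTop_zero.add tendsto_const_nhds
      rw [zero_add] at h1
      exact (h1.inv₀ hpos.ne').const_mul _
  have hsum := tendsto_finset_sum (Finset.Icc 1 m₀)
    (fun k hk => ((key k hk).const_mul ((-1 : ℝ) ^ (k + 1) * (m₀.choose k : ℝ))))
  have heq : Real.pi / Real.sin (2 * Real.pi / η) *
        ∑ k ∈ Finset.Icc 1 m₀, (-1 : ℝ) ^ (k + 1) * (m₀.choose k : ℝ) / H k
      = ∑ k ∈ Finset.Icc 1 m₀, (-1 : ℝ) ^ (k + 1) * (m₀.choose k : ℝ) *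
          ((H k)⁻¹ * (π / Real.sin (2 * π / η))) := by
    rw [Finset.mul_sum]
    refine Finset.sum_congr rfl fun k hk => ?_
    ring
  rw [heq]
  exact hsum
end

section
/- Let 2 < η < 4 and H > 0. For Λ > 0 define Δ(Λ) = ∫₀^∞ (1+x)^{−1} [ (H x^{2/η})^{−1} − (Λ^{−1} + H x^{2/η})^{−1} ] dx, with the integral taken with respect to Lebesgue measure on (0, ∞). Then lim_{Λ→∞} Λ^{η/2 − 1} Δ(Λ) = H^{−η/2} ∫₀^∞ t^{−2/η} (1 + t^{2/η})^{−1} dt; in particular Δ(Λ) = O(Λ^{1 − η/2}) as Λ → ∞. -/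
open MeasureTheory Filter Asymptotics
open Set

lemma gap_aux_integrable (η : ℝ) (hη1 : 2 < η) (hη2 : η < 4) :
    IntegrableOn (fun t : ℝ => t ^ (-(2 / η)) * (1 + t ^ (2 / η))⁻¹) (Ioi 0) := by
  have hη0 : (0:ℝ) < η := by linarith
  have hcont : ContinuousOn (fun t : ℝ => t ^ (-(2 / η)) * (1 + t ^ (2 / η))⁻¹) (Ioi 0) := by
    apply ContinuousOn.mul
    · exact fun t ht => (Real.continuousAt_rpow_const t _ (Or.inl (ne_of_gt ht))).continuousWithinAt
    · apply ContinuousOn.inv₀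
      · exact continuousOn_const.add (fun t ht =>
          (Real.continuousAt_rpow_const t _ (Or.inl (ne_of_gt ht))).continuousWithinAt)
      · intro t ht
        have : 0 < t ^ (2/η) := Real.rpow_pos_of_pos ht _
        positivity
  have hmeas : AEStronglyMeasurable (fun t : ℝ => t ^ (-(2 / η)) * (1 + t ^ (2 / η))⁻¹) (volume.restrict (Ioi 0)) := hcont.aestronglyMeasurable measurableSet_Ioi
  have h01 : IntegrableOn (fun t : ℝ => t ^ (-(2 / η)) * (1 + t ^ (2 / η))⁻¹) (Ioc 0 1) := by
    have hbase : IntegrableOn (fun t : ℝ => t ^ (-(2/η))) (Ioc (0:ℝ) 1) :=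
      (intervalIntegral.intervalIntegrable_rpow' (by
        have : 2/η < 1 := (div_lt_one hη0).2 hη1
        linarith)).1
    apply hbase.integrable.mono
    · exact hmeas.mono_measure (Measure.restrict_mono Ioc_subset_Ioi_self le_rfl)
    · filter_upwards [ae_restrict_mem measurableSet_Ioc] with t ht
      have ht0 : 0 < t := ht.1
      have hu : 0 < t ^ (2/η) := Real.rpow_pos_of_pos ht0 _
      have h1 : 0 < t ^ (-(2/η)) := Real.rpow_pos_of_pos ht0 _
      rw [Real.norm_eq_abs, Real.norm_eq_abs, abs_of_nonneg (by positivity),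
        abs_of_nonneg h1.le]
      calc t ^ (-(2/η)) * (1 + t ^ (2/η))⁻¹ ≤ t ^ (-(2/η)) * 1 := by
            apply mul_le_mul_of_nonneg_left _ h1.le
            rw [inv_le_one_iff₀]; right; linarith
        _ = t ^ (-(2/η)) := mul_one _
  have h1i : IntegrableOn (fun t : ℝ => t ^ (-(2 / η)) * (1 + t ^ (2 / η))⁻¹) (Ioi 1) := by
    have hbase : IntegrableOn (fun t : ℝ => t ^ (-(4/η))) (Ioi (1:ℝ)) :=
      integrableOn_Ioi_rpow_of_lt (by
        have : 1 < 4/η := (one_lt_div hη0).2 hη2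
        linarith) one_pos
    apply hbase.integrable.mono
    · exact hmeas.mono_measure (Measure.restrict_mono (Ioi_subset_Ioi one_pos.le) le_rfl)
    · filter_upwards [ae_restrict_mem measurableSet_Ioi] with t ht
      have ht0 : (0:ℝ) < t := lt_trans one_pos ht
      have hu : 0 < t ^ (2/η) := Real.rpow_pos_of_pos ht0 _
      have h1 : 0 < t ^ (-(2/η)) := Real.rpow_pos_of_pos ht0 _
      rw [Real.norm_eq_abs, Real.norm_eq_abs, abs_of_nonneg (by positivity),
        abs_of_nonneg (Real.rpow_pos_of_pos ht0 _).le]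
      have key : t ^ (-(4/η)) = t ^ (-(2/η)) * (t ^ (2/η))⁻¹ := by
        rw [← Real.rpow_neg ht0.le, ← Real.rpow_add ht0]; ring_nf
      rw [key]
      apply mul_le_mul_of_nonneg_left _ h1.le
      exact inv_anti₀ hu (by linarith)
  have : Ioc (0:ℝ) 1 ∪ Ioi 1 = Ioi 0 := Ioc_union_Ioi_eq_Ioi one_pos.le
  rw [← this]
  exact h01.union h1i

lemma gap_aux_key (η H : ℝ) (hη1 : 2 < η) (hH : 0 < H) (Λ : ℝ) (hΛ : 0 < Λ) :
    (∫ x in Ioi (0:ℝ), (1 + x)⁻¹ * ((H * x ^ (2 / η))⁻¹ - (Λ⁻¹ + H * x ^ (2 / η))⁻¹))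
      = (Λ * (Λ * H) ^ (-(η / 2))) *
        ∫ t in Ioi (0:ℝ), (1 + (Λ * H) ^ (-(η / 2)) * t)⁻¹ *
          (t ^ (-(2 / η)) * (1 + t ^ (2 / η))⁻¹) := by
  have hη0 : (0:ℝ) < η := by linarith
  set c : ℝ := (Λ * H) ^ (-(η / 2)) with hcdef
  have hΛH : 0 < Λ * H := mul_pos hΛ hH
  have hc : 0 < c := Real.rpow_pos_of_pos hΛH _
  have hcv := integral_comp_mul_left_Ioi
    (fun x => (1 + x)⁻¹ * ((H * x ^ (2 / η))⁻¹ - (Λ⁻¹ + H * x ^ (2 / η))⁻¹)) 0 hc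
  simp only [mul_zero, smul_eq_mul] at hcv
  have hce : c ^ (2 / η) = (Λ * H)⁻¹ := by
    rw [hcdef, ← Real.rpow_mul hΛH.le, show -(η/2) * (2/η) = -1 by field_simp,
      Real.rpow_neg_one]
  have hpt : ∀ t ∈ Ioi (0:ℝ),
      (1 + c * t)⁻¹ * ((H * (c * t) ^ (2 / η))⁻¹ - (Λ⁻¹ + H * (c * t) ^ (2 / η))⁻¹)
        = Λ * ((1 + c * t)⁻¹ * (t ^ (-(2 / η)) * (1 + t ^ (2 / η))⁻¹)) := by
    intro t ht
    have ht0 : 0 < t := ht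
    have hu : 0 < t ^ (2 / η) := Real.rpow_pos_of_pos ht0 _
    have h1u : (0:ℝ) < 1 + t ^ (2 / η) := by linarith
    have h1c : (0:ℝ) < 1 + c * t := by nlinarith [mul_pos hc ht0]
    have hct : H * (c * t) ^ (2 / η) = Λ⁻¹ * t ^ (2 / η) := by
      rw [Real.mul_rpow hc.le ht0.le, hce]
      field_simp
    rw [hct, Real.rpow_neg ht0.le]
    field_simp
    ring
  have h2 : (∫ x in Ioi (0:ℝ), (1+x)⁻¹ * ((H * x ^ (2/η))⁻¹ - (Λ⁻¹ + H * x ^ (2/η))⁻¹))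
      = c * ∫ x in Ioi (0:ℝ),
        (1 + c * x)⁻¹ * ((H * (c * x) ^ (2/η))⁻¹ - (Λ⁻¹ + H * (c * x) ^ (2/η))⁻¹) := by
    rw [hcv, mul_inv_cancel_left₀ hc.ne']
  rw [h2, setIntegral_congr_fun measurableSet_Ioi hpt, MeasureTheory.integral_const_mul]
  ring

/-- **Corollary 2 of the paper.** Let `2 < η < 4` and `H > 0`. For `Λ > 0` let
`Δ(Λ) = ∫₀^∞ (1+x)⁻¹ [(H x^(2/η))⁻¹ - (Λ⁻¹ + H x^(2/η))⁻¹] dx`. Then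
`lim_{Λ→∞} Λ^(η/2 - 1) Δ(Λ) = H^(-η/2) ∫₀^∞ t^(-2/η) (1 + t^(2/η))⁻¹ dt`;
in particular `Δ(Λ) = O(Λ^(1 - η/2))` as `Λ → ∞`. -/
theorem gap_term_convergence_rate (η H : ℝ) (hη1 : 2 < η) (hη2 : η < 4) (hH : 0 < H) :
    Tendsto
      (fun Λ : ℝ => Λ ^ (η / 2 - 1) *
        ∫ x in Set.Ioi (0 : ℝ),
          (1 + x)⁻¹ * ((H * x ^ (2 / η))⁻¹ - (Λ⁻¹ + H * x ^ (2 / η))⁻¹))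
      atTop
      (nhds (H ^ (-(η / 2)) *
        ∫ t in Set.Ioi (0 : ℝ), t ^ (-(2 / η)) * (1 + t ^ (2 / η))⁻¹)) ∧
    (fun Λ : ℝ => ∫ x in Set.Ioi (0 : ℝ),
        (1 + x)⁻¹ * ((H * x ^ (2 / η))⁻¹ - (Λ⁻¹ + H * x ^ (2 / η))⁻¹))
      =O[atTop] fun Λ : ℝ => Λ ^ (1 - η / 2) := by
  have hη0 : (0:ℝ) < η := by linarith
  set g0 : ℝ → ℝ := fun t => t ^ (-(2 / η)) * (1 + t ^ (2 / η))⁻¹ with hg0def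
  have hint : IntegrableOn g0 (Ioi 0) := gap_aux_integrable η hη1 hη2
  have hc0 : Tendsto (fun Λ : ℝ => (Λ * H) ^ (-(η / 2))) atTop (nhds 0) := by
    apply (tendsto_rpow_neg_atTop (by linarith : (0:ℝ) < η / 2)).comp
    exact Tendsto.atTop_mul_const hH tendsto_id
  have hφ : Tendsto (fun Λ : ℝ => ∫ t in Ioi (0:ℝ), (1 + (Λ * H) ^ (-(η / 2)) * t)⁻¹ * g0 t)
      atTop (nhds (∫ t in Ioi (0:ℝ), g0 t)) := by
    apply tendsto_integral_filter_of_dominated_convergence g0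
    · filter_upwards with Λ
      exact ((measurable_const.add (measurable_const.mul measurable_id)).inv
        |>.aestronglyMeasurable).mul hint.1
    · filter_upwards [eventually_ge_atTop (1:ℝ)] with Λ hΛ
      have hc : 0 < (Λ * H) ^ (-(η / 2)) :=
        Real.rpow_pos_of_pos (mul_pos (by linarith) hH) _
      filter_upwards [ae_restrict_mem measurableSet_Ioi] with t ht
      have ht0 : 0 < t := ht
      have hu : 0 < t ^ (2 / η) := Real.rpow_pos_of_pos ht0 _
      have hg0n : 0 ≤ g0 t := by
        have h1 : 0 ≤ t ^ (-(2/η)) := (Real.rpow_pos_of_pos ht0 _).le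
        have h2 : (0:ℝ) < 1 + t ^ (2/η) := by linarith
        rw [hg0def]; positivity
      have h1 : (1:ℝ) ≤ 1 + (Λ * H) ^ (-(η / 2)) * t := by nlinarith [mul_pos hc ht0]
      rw [norm_mul, Real.norm_eq_abs, Real.norm_eq_abs, abs_of_nonneg (by positivity),
        abs_of_nonneg hg0n]
      calc (1 + (Λ * H) ^ (-(η / 2)) * t)⁻¹ * g0 t ≤ 1 * g0 t := by
            apply mul_le_mul_of_nonneg_right _ hg0n
            rw [inv_le_one_iff₀]; right; exact h1
        _ = g0 t := one_mul _
    · exact hint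
    · filter_upwards [ae_restrict_mem measurableSet_Ioi] with t ht
      have h1 : Tendsto (fun Λ : ℝ => (1 + (Λ * H) ^ (-(η / 2)) * t)⁻¹) atTop (nhds 1) := by
        have := (((hc0.mul_const t).const_add 1).inv₀ (by norm_num))
        simpa using this
      simpa using h1.mul_const (g0 t)
  have hscal : ∀ Λ : ℝ, 0 < Λ →
      Λ ^ (η / 2 - 1) * (Λ * (Λ * H) ^ (-(η / 2))) = H ^ (-(η / 2)) := by
    intro Λ hΛ
    rw [Real.mul_rpow hΛ.le hH.le]
    have e1 : Λ ^ (η / 2 - 1) * (Λ * Λ ^ (-(η / 2))) = 1 := by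
      rw [show Λ * Λ ^ (-(η/2)) = Λ ^ (1 + -(η/2)) by rw [Real.rpow_add hΛ, Real.rpow_one],
        ← Real.rpow_add hΛ, show η/2 - 1 + (1 + -(η/2)) = 0 by ring, Real.rpow_zero]
    calc Λ ^ (η / 2 - 1) * (Λ * (Λ ^ (-(η / 2)) * H ^ (-(η / 2))))
        = (Λ ^ (η / 2 - 1) * (Λ * Λ ^ (-(η / 2)))) * H ^ (-(η / 2)) := by ring
      _ = H ^ (-(η / 2)) := by rw [e1, one_mul]
  have main : Tendsto
      (fun Λ : ℝ => Λ ^ (η / 2 - 1) *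
        ∫ x in Set.Ioi (0 : ℝ),
          (1 + x)⁻¹ * ((H * x ^ (2 / η))⁻¹ - (Λ⁻¹ + H * x ^ (2 / η))⁻¹))
      atTop (nhds (H ^ (-(η / 2)) * ∫ t in Set.Ioi (0 : ℝ), g0 t)) := by
    apply Tendsto.congr' _ (hφ.const_mul (H ^ (-(η / 2))))
    filter_upwards [eventually_gt_atTop (0:ℝ)] with Λ hΛ
    rw [gap_aux_key η H hη1 hH Λ hΛ, ← mul_assoc, hscal Λ hΛ]
  refine ⟨main, ?_⟩
  have hO1 : (fun Λ : ℝ => Λ ^ (η / 2 - 1) *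
      ∫ x in Set.Ioi (0 : ℝ),
        (1 + x)⁻¹ * ((H * x ^ (2 / η))⁻¹ - (Λ⁻¹ + H * x ^ (2 / η))⁻¹))
      =O[atTop] (fun _ : ℝ => (1:ℝ)) := main.isBigO_one ℝ
  have hmul : (fun Λ : ℝ => Λ ^ (1 - η / 2) * (Λ ^ (η / 2 - 1) *
      ∫ x in Set.Ioi (0 : ℝ),
        (1 + x)⁻¹ * ((H * x ^ (2 / η))⁻¹ - (Λ⁻¹ + H * x ^ (2 / η))⁻¹)))
      =O[atTop] (fun Λ : ℝ => Λ ^ (1 - η / 2) * 1) :=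
    (isBigO_refl (fun Λ : ℝ => Λ ^ (1 - η / 2)) atTop).mul hO1
  apply hmul.congr' ?_ ?_
  · filter_upwards [eventually_gt_atTop (0:ℝ)] with Λ hΛ
    rw [← mul_assoc, ← Real.rpow_add hΛ, show 1 - η/2 + (η/2 - 1) = 0 by ring,
      Real.rpow_zero, one_mul]
  · filter_upwards with Λ
    rw [mul_one]
end
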